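/- Let X and Y be Banach spaces and T : X → Y a bounded linear operator with m(T) = 0, where m(T) = inf{‖Tx‖ : x ∈ S_X}. Then for every ε > 0 there exists a rank-one operator K : X → Y with ‖K‖ < ε such that S = T − K satisfies m(S) = 0 and S attains its minimum modulus. -/

import Mathlib

open Filter Topology

noncomputable def minMod {X Y : Type*} [NormedAddCommGroup X] [NormedSpace ℝ X]
    [NormedAddCommGroup Y] [NormedSpace ℝ Y] (T : X →L[ℝ] Y) : ℝ :=
  sInf {r : ℝ | ∃ x : X, ‖x‖ = 1 ∧ ‖T x‖ = r}

def WeaklyNull {X : Type*} [NormedAddCommGroup X] [NormedSpace ℝ X] (x : ℕ → X) : Prop :=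
  ∀ f : X →L[ℝ] ℝ, Tendsto (fun n => f (x n)) atTop (𝓝 0)

def AttainsMinMod {X Y : Type*} [NormedAddCommGroup X] [NormedSpace ℝ X]
    [NormedAddCommGroup Y] [NormedSpace ℝ Y] (T : X →L[ℝ] Y) : Prop :=
  ∃ x : X, ‖x‖ = 1 ∧ ‖T x‖ = minMod T

def PairPropM (X Y : Type*) [NormedAddCommGroup X] [NormedSpace ℝ X]
    [NormedAddCommGroup Y] [NormedSpace ℝ Y] : Prop :=
  ∀ T : X →L[ℝ] Y, 1 ≤ minMod T →
    ∀ (x : X) (y : Y), ‖x‖ ≤ ‖y‖ → ∀ xs : ℕ → X, WeaklyNull xs →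
      limsup (fun n => ‖x + xs n‖) atTop ≤ limsup (fun n => ‖y + T (xs n)‖) atTop

def PairPropO (X Y : Type*) [NormedAddCommGroup X] [NormedSpace ℝ X]
    [NormedAddCommGroup Y] [NormedSpace ℝ Y] : Prop :=
  ∀ T : X →L[ℝ] Y, 1 ≤ minMod T →
    ∀ y : Y, y ≠ 0 → ∀ xs : ℕ → X, WeaklyNull xs →
      limsup (fun n => ‖xs n‖) atTop < limsup (fun n => ‖y + T (xs n)‖) atTop

def PropertyM (X : Type*) [NormedAddCommGroup X] [NormedSpace ℝ X] : Prop :=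
  ∀ x y : X, ‖y‖ ≤ ‖x‖ → ∀ xs : ℕ → X, WeaklyNull xs →
    limsup (fun n => ‖y + xs n‖) atTop ≤ limsup (fun n => ‖x + xs n‖) atTop

def OpialProperty (X : Type*) [NormedAddCommGroup X] [NormedSpace ℝ X] : Prop :=
  ∀ x : X, x ≠ 0 → ∀ xs : ℕ → X, WeaklyNull xs →
    limsup (fun n => ‖xs n‖) atTop < limsup (fun n => ‖x + xs n‖) atTop

def WeakMinimizingProperty (X Y : Type*) [NormedAddCommGroup X] [NormedSpace ℝ X]
    [NormedAddCommGroup Y] [NormedSpace ℝ Y] : Prop :=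
  ∀ T : X →L[ℝ] Y,
    (∃ xs : ℕ → X, (∀ n, ‖xs n‖ = 1) ∧
      Tendsto (fun n => ‖T (xs n)‖) atTop (𝓝 (minMod T)) ∧ ¬ WeaklyNull xs) →
    AttainsMinMod T

theorem stmt0 {X Y : Type*} [NormedAddCommGroup X] [NormedSpace ℝ X] [CompleteSpace X]
    [NormedAddCommGroup Y] [NormedSpace ℝ Y] [CompleteSpace Y] [Nontrivial X]
    (T : X →L[ℝ] Y) (hT : minMod T = 0) :
    ∀ ε : ℝ, 0 < ε → ∃ K : X →L[ℝ] Y,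
      (∃ (f : X →L[ℝ] ℝ) (y : Y), ∀ x : X, K x = f x • y) ∧
      ‖K‖ < ε ∧ minMod (T - K) = 0 ∧ AttainsMinMod (T - K) := by
  intro ε hε
  -- the set is nonempty
  have hne : {r : ℝ | ∃ x : X, ‖x‖ = 1 ∧ ‖T x‖ = r}.Nonempty := by
    obtain ⟨x, hx⟩ := exists_norm_eq X (le_of_lt one_pos)
    exact ⟨‖T x‖, x, hx, rfl⟩
  have hlt : sInf {r : ℝ | ∃ x : X, ‖x‖ = 1 ∧ ‖T x‖ = r} < ε := by
    rw [show sInf {r : ℝ | ∃ x : X, ‖x‖ = 1 ∧ ‖T x‖ = r} = minMod T from rfl, hT]; exact hε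
  obtain ⟨r, ⟨x₀, hx₀, hTx₀⟩, hrε⟩ := exists_lt_of_csInf_lt hne hlt
  have hx₀ne : x₀ ≠ 0 := by intro h; rw [h, norm_zero] at hx₀; exact one_ne_zero hx₀.symm
  obtain ⟨f, hf1, hfx₀⟩ := exists_dual_vector ℝ x₀ (norm_ne_zero_iff.mpr hx₀ne)
  set K : X →L[ℝ] Y := f.smulRight (T x₀) with hK
  have hKx₀ : K x₀ = T x₀ := by
    simp [hK, hfx₀, hx₀]
  have hSx₀ : (T - K) x₀ = 0 := by
    simp [ContinuousLinearMap.sub_apply, hKx₀]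
  have hmin : minMod (T - K) = 0 := by
    apply le_antisymm
    · exact csInf_le ⟨0, fun r ⟨x, _, hr⟩ => hr ▸ norm_nonneg _⟩
        ⟨x₀, hx₀, by rw [hSx₀, norm_zero]⟩
    · exact le_csInf ⟨0, x₀, hx₀, by rw [hSx₀, norm_zero]⟩
        (fun r ⟨x, _, hr⟩ => hr ▸ norm_nonneg _)
  refine ⟨K, ⟨f, T x₀, fun x => rfl⟩, ?_, hmin, x₀, hx₀, by rw [hSx₀, norm_zero, hmin]⟩
  calc ‖K‖ = ‖f‖ * ‖T x₀‖ := ContinuousLinearMap.norm_smulRight_apply f (T x₀)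
  _ = ‖T x₀‖ := by rw [hf1, one_mul]
  _ < ε := hTx₀ ▸ hrε
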